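/- Let X be a subshift over a finite alphabet Λ. For every ξ ∈ Ω_X one has: (i) 1 ∈ ξ; (ii) ξ is convex: whenever g, h ∈ ξ and k ∈ 𝔽 satisfies |g⁻¹h| = |g⁻¹k| + |k⁻¹h|, then k ∈ ξ; (iii) for every g ∈ ξ there exists a unique letter a ∈ Λ such that ga ∈ ξ; (iv) if g ∈ ξ and α is a finite word with gα ∈ ξ, then α lies in the language L_X; (v) every element of ξ is of the form αβ⁻¹ with α, β ∈ 𝔽₊. -/

import Mathlib

open scoped Classical

namespace SubshiftPaper

variable {Λ : Type}

/-- The left shift on infinite words. -/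
def shiftMap (x : ℕ → Λ) : ℕ → Λ := fun n => x (n + 1)

/-- Concatenation of a finite word with an infinite word. -/
def cat (α : List Λ) (y : ℕ → Λ) : ℕ → Λ := fun n => α.getD n (y (n - α.length))

/-- `α` is a prefix of the infinite word `x`. -/
def Pref (α : List Λ) (x : ℕ → Λ) : Prop := ∀ (i : ℕ) (h : i < α.length), x i = α[i]

/-- The tail of `x` after `n` letters. -/
def tail (x : ℕ → Λ) (n : ℕ) : ℕ → Λ := fun i => x (n + i)

/-- `α` occurs in `x` at position `n`. -/
def OccursAt (α : List Λ) (x : ℕ → Λ) (n : ℕ) : Prop :=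
  ∀ (i : ℕ) (h : i < α.length), x (n + i) = α[i]

/-- `α` occurs in `x` (as a contiguous block of letters). -/
def Occurs (α : List Λ) (x : ℕ → Λ) : Prop := ∃ n, OccursAt α x n

/-- `X` is a subshift: a nonempty closed shift-invariant subset. -/
def IsSubshift [TopologicalSpace Λ] (X : Set (ℕ → Λ)) : Prop :=
  X.Nonempty ∧ IsClosed X ∧ ∀ x ∈ X, shiftMap x ∈ X

/-- The set of infinite words avoiding all words in `F`. -/
def ForbidSpace (F : Set (List Λ)) : Set (ℕ → Λ) := {x | ∀ α ∈ F, ¬ Occurs α x}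

/-- `X` is a subshift of finite type. -/
def IsSFT (X : Set (ℕ → Λ)) : Prop := ∃ F : Set (List Λ), F.Finite ∧ X = ForbidSpace F

/-- The follower set of a finite word. -/
def follower (X : Set (ℕ → Λ)) (α : List Λ) : Set (ℕ → Λ) := {y | y ∈ X ∧ cat α y ∈ X}

/-- The cylinder of a finite word. -/
def cylinder (X : Set (ℕ → Λ)) (α : List Λ) : Set (ℕ → Λ) := {x | x ∈ X ∧ Pref α x}

/-- The language of `X`. -/
def Language (X : Set (ℕ → Λ)) : Set (List Λ) := {α | ∃ x ∈ X, Occurs α x}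

/-- The embedding of finite words into the free group. -/
def wd (α : List Λ) : FreeGroup Λ := (α.map FreeGroup.of).prod

/-- Indicator function of a set of group elements. -/
noncomputable def chi (s : Set (FreeGroup Λ)) : FreeGroup Λ → Bool :=
  fun g => if g ∈ s then true else false

/-- The set `ξ_x ⊆ 𝔽`. -/
def xiSet [DecidableEq Λ] (X : Set (ℕ → Λ)) (x : ℕ → Λ) : Set (FreeGroup Λ) :=
  {g | ∃ α β : List Λ, g = wd α * (wd β)⁻¹ ∧
        FreeGroup.norm g = α.length + β.length ∧
        Pref α x ∧ tail x α.length ∈ follower X α ∩ follower X β}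

/-- `ξ_x` as an element of `2^𝔽`. -/
noncomputable def xiB [DecidableEq Λ] (X : Set (ℕ → Λ)) (x : ℕ → Λ) : FreeGroup Λ → Bool :=
  chi (xiSet X x)

/-- The spectrum `Ω_X`: the closure of `{ξ_x : x ∈ X}` in `2^𝔽`. -/
noncomputable def Omega [DecidableEq Λ] (X : Set (ℕ → Λ)) : Set (FreeGroup Λ → Bool) :=
  closure ((fun x => xiB X x) '' X)

/-- Left translation of an element of `2^𝔽`. -/
def translate (g : FreeGroup Λ) (ξ : FreeGroup Λ → Bool) : FreeGroup Λ → Bool :=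
  fun h => ξ (g⁻¹ * h)

/-- `x` is the stem of `ξ`: `ξ ∩ 𝔽₊` is exactly the set of prefixes of `x`. -/
def IsStem (ξ : FreeGroup Λ → Bool) (x : ℕ → Λ) : Prop :=
  {g | ξ g = true} ∩ {g | ∃ α : List Λ, g = wd α} =
    {g | ∃ α : List Λ, g = wd α ∧ Pref α x}

/-- `x` is the stem of `ξ` at `g`: `ξ ∩ g𝔽₊ = {gα : α is a prefix of x}`. -/
def IsStemAt (ξ : FreeGroup Λ → Bool) (g : FreeGroup Λ) (x : ℕ → Λ) : Prop :=
  {h | ξ h = true} ∩ {h | ∃ α : List Λ, h = g * wd α} =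
    {h | ∃ α : List Λ, h = g * wd α ∧ Pref α x}

/-- The orbit of `ξ` under the spectral partial action. -/
def Orbit (ξ : FreeGroup Λ → Bool) : Set (FreeGroup Λ → Bool) :=
  {η | ∃ g : FreeGroup Λ, ξ g⁻¹ = true ∧ η = translate g ξ}

/-- Topological freeness of the spectral partial action. -/
noncomputable def TopFree [DecidableEq Λ] (X : Set (ℕ → Λ)) : Prop :=
  ∀ g : FreeGroup Λ, g ≠ 1 →
    ∀ U : Set (FreeGroup Λ → Bool), IsOpen U →
      (U ∩ Omega X ⊆ {ξ | ξ g⁻¹ = true ∧ translate g ξ = ξ}) → U ∩ Omega X = ∅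

/-- The periodic infinite word `γ^∞`. -/
noncomputable def perInf [Nonempty Λ] (γ : List Λ) : ℕ → Λ :=
  fun n => γ.getD (n % γ.length) (Classical.arbitrary Λ)

/-- `n`-fold concatenation of a finite word with itself. -/
def rep : ℕ → List Λ → List Λ
  | 0, _ => []
  | n + 1, γ => γ ++ rep n γ

/-- `γ` is a circuit relative to `X`. -/
noncomputable def IsCircuit [Nonempty Λ] (X : Set (ℕ → Λ)) (γ : List Λ) : Prop :=
  γ ≠ [] ∧ perInf γ ∈ X

/-- `y` is an exit for the circuit `γ`. -/
noncomputable def IsExit [Nonempty Λ] (X : Set (ℕ → Λ)) (γ : List Λ) (y : ℕ → Λ) : Prop :=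
  y ≠ perInf γ ∧ cat γ y ∈ X

/-- `z` is a strong exit for the circuit `γ`. -/
noncomputable def IsStrongExit [Nonempty Λ] (X : Set (ℕ → Λ)) (γ : List Λ) (z : ℕ → Λ) : Prop :=
  z ≠ perInf γ ∧ ∀ n : ℕ, cat (rep n γ) z ∈ X

/-- The sets `X_g` of the standard partial action. -/
def Xg [DecidableEq Λ] (X : Set (ℕ → Λ)) (g : FreeGroup Λ) : Set (ℕ → Λ) :=
  {x | ∃ α β : List Λ, g = wd α * (wd β)⁻¹ ∧
        FreeGroup.norm g = α.length + β.length ∧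
        ∃ y ∈ follower X α ∩ follower X β, x = cat α y}

/-- `x` is a fixed point for `θ_g`. -/
def IsThetaFixed [DecidableEq Λ] (X : Set (ℕ → Λ)) (g : FreeGroup Λ) (x : ℕ → Λ) : Prop :=
  ∃ α β : List Λ, g = wd α * (wd β)⁻¹ ∧
    FreeGroup.norm g = α.length + β.length ∧
    ∃ y ∈ follower X α ∩ follower X β, x = cat β y ∧ cat α y = x

/-- `x` may be collectively reached from the finite set `B`. -/
def CollReached (X : Set (ℕ → Λ)) (B : Finset (List Λ)) (x : ℕ → Λ) : Prop :=
  ∃ α γ : List Λ, Pref α x ∧ ∀ β ∈ B, cat (β ++ γ) (tail x α.length) ∈ X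

/-- `X` is collectively cofinal. -/
def CollCofinal (X : Set (ℕ → Λ)) : Prop :=
  ∀ B : Finset (List Λ), ↑B ⊆ Language X → (⋂ β ∈ B, follower X β).Nonempty →
    ∀ x ∈ X, CollReached X B x

/-- `X` is strongly cofinal. -/
def StrongCofinal (X : Set (ℕ → Λ)) : Prop :=
  ∀ β ∈ Language X, ∃ M : ℕ, ∀ x ∈ X, ∃ α γ : List Λ, Pref α x ∧
    cat (β ++ γ) (tail x α.length) ∈ X ∧ α.length + γ.length ≤ M

/-- The even shift. -/
def evenShift : Set (ℕ → Fin 2) :=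
  ForbidSpace {w | ∃ n : ℕ, w = 0 :: (List.replicate (2 * n + 1) 1 ++ [0])}


section AuxWords
set_option linter.unusedSectionVars false

variable {Λ : Type} [DecidableEq Λ]

/-- positive letters -/
def posW (α : List Λ) : List (Λ × Bool) := α.map (fun a => (a, true))

/-- reversed negative letters -/
def negW (β : List Λ) : List (Λ × Bool) := (β.map (fun a => (a, false))).reverse

@[simp] lemma posW_nil : posW ([] : List Λ) = [] := rfl
@[simp] lemma negW_nil : negW ([] : List Λ) = [] := rfl
@[simp] lemma posW_length (α : List Λ) : (posW α).length = α.length := by simp [posW]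
@[simp] lemma negW_length (β : List Λ) : (negW β).length = β.length := by simp [negW]
lemma posW_append (α β : List Λ) : posW (α ++ β) = posW α ++ posW β := by simp [posW]
lemma posW_cons (a : Λ) (α : List Λ) : posW (a :: α) = (a, true) :: posW α := rfl
lemma negW_concat (β : List Λ) (b : Λ) : negW (β ++ [b]) = (b, false) :: negW β := by
  simp [negW]
lemma negW_cons (b : Λ) (β : List Λ) : negW (b :: β) = negW β ++ [(b, false)] := by
  simp [negW]
lemma mem_posW {p : Λ × Bool} {α : List Λ} (h : p ∈ posW α) : p.2 = true := by
  simp only [posW, List.mem_map] at h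
  obtain ⟨a, _, rfl⟩ := h; rfl
lemma mem_negW {p : Λ × Bool} {β : List Λ} (h : p ∈ negW β) : p.2 = false := by
  simp only [negW, List.mem_reverse, List.mem_map] at h
  obtain ⟨a, _, rfl⟩ := h; rfl
lemma posW_injective : Function.Injective (posW (Λ := Λ)) := by
  intro a b h
  exact List.map_injective_iff.2 (fun x y hxy => (Prod.mk.injEq _ _ _ _ ▸ hxy).1) h

lemma wd_nil : wd ([] : List Λ) = 1 := rfl
lemma wd_cons (a : Λ) (α : List Λ) : wd (a :: α) = FreeGroup.of a * wd α := by
  simp [wd]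
lemma wd_append (α β : List Λ) : wd (α ++ β) = wd α * wd β := by
  simp [wd]
lemma wd_eq_mk (α : List Λ) : wd α = FreeGroup.mk (posW α) := by
  induction α with
  | nil => rfl
  | cons a α ih =>
    rw [wd_cons, ih, posW_cons, show FreeGroup.of a = FreeGroup.mk [(a, true)] from rfl,
      FreeGroup.mul_mk]
    rfl
lemma wd_inv_eq_mk (β : List Λ) : (wd β)⁻¹ = FreeGroup.mk (negW β) := by
  rw [wd_eq_mk, FreeGroup.inv_mk]
  congr 1
  simp [FreeGroup.invRev, posW, negW]
lemma wd_mul_inv_eq (α β : List Λ) :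
    wd α * (wd β)⁻¹ = FreeGroup.mk (posW α ++ negW β) := by
  rw [wd_eq_mk, wd_inv_eq_mk, FreeGroup.mul_mk]

/-- non-cancellation relation -/
def NC : (Λ × Bool) → (Λ × Bool) → Prop := fun p q => ¬(p.1 = q.1 ∧ p.2 = !q.2)

lemma reduce_eq_self_of_chain' : ∀ {w : List (Λ × Bool)}, w.Chain' NC → FreeGroup.reduce w = w
  | [], _ => rfl
  | x :: w, h => by
    have hw : List.Chain' NC w := h.tail
    rw [FreeGroup.reduce.cons, reduce_eq_self_of_chain' hw]
    cases w with
    | nil => rfl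
    | cons y t =>
      have hnc : NC x y := (List.isChain_cons_cons.1 h).1
      simp only [NC] at hnc
      simp [hnc]

lemma chain'_of_reduce_eq : ∀ {w : List (Λ × Bool)}, FreeGroup.reduce w = w → w.Chain' NC := by
  intro w
  induction w with
  | nil => intro _; exact List.isChain_nil
  | cons x w ih =>
    intro h
    cases w with
    | nil => exact List.isChain_singleton _
    | cons y t =>
      rw [FreeGroup.reduce.cons] at h
      rcases hr : FreeGroup.reduce (y :: t) with _ | ⟨z, r⟩
      · rw [hr] at h
        simp at h
      · rw [hr] at h
        dsimp only at h
        by_cases hc : x.1 = z.1 ∧ x.2 = !z.2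
        · rw [if_pos hc] at h
          have h1 := FreeGroup.Red.length_le (FreeGroup.reduce.red (L := y :: t))
          rw [hr, h] at h1
          simp at h1
        · rw [if_neg hc] at h
          have h2 : z = y ∧ r = t := by
            constructor
            · exact (List.cons.injEq _ _ _ _ ▸ ((List.cons.injEq _ _ _ _ ▸ h).2)).1
            · exact (List.cons.injEq _ _ _ _ ▸ ((List.cons.injEq _ _ _ _ ▸ h).2)).2
          obtain ⟨rfl, rfl⟩ := h2
          exact List.isChain_cons_cons.2 ⟨hc, ih hr⟩

lemma chain'_all {σ : Type*} {R : σ → σ → Prop} (h : ∀ a b, R a b) :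
    ∀ l : List σ, l.Chain' R
  | [] => List.isChain_nil
  | [_] => List.isChain_singleton _
  | a :: b :: l => List.isChain_cons_cons.2 ⟨h a b, chain'_all h (b :: l)⟩

lemma chain'_posW (α : List Λ) : (posW α).Chain' NC := by
  rw [posW, List.Chain', List.isChain_map]
  exact chain'_all (fun a b => by simp [NC]) α

lemma chain'_negW (β : List Λ) : (negW β).Chain' NC := by
  rw [negW, List.Chain', List.isChain_reverse, List.isChain_map]
  exact chain'_all (fun a b => by simp [NC, Function.flip_def]) β

lemma reduce_eq_of_length {L : List (Λ × Bool)}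
    (h : (FreeGroup.reduce L).length = L.length) : FreeGroup.reduce L = L :=
  (FreeGroup.Red.sublist FreeGroup.reduce.red).eq_of_length h

lemma norm_eq_toWord_length (g : FreeGroup Λ) : FreeGroup.norm g = g.toWord.length := rfl

lemma toWord_wd_mul_inv {α β : List Λ}
    (h : FreeGroup.norm (wd α * (wd β)⁻¹) = α.length + β.length) :
    (wd α * (wd β)⁻¹).toWord = posW α ++ negW β := by
  rw [wd_mul_inv_eq] at h ⊢
  rw [FreeGroup.toWord_mk]
  apply reduce_eq_of_length
  rw [norm_eq_toWord_length, FreeGroup.toWord_mk] at h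
  rw [h]
  simp

lemma chain'_of_norm {α β : List Λ}
    (h : FreeGroup.norm (wd α * (wd β)⁻¹) = α.length + β.length) :
    (posW α ++ negW β).Chain' NC := by
  apply chain'_of_reduce_eq
  have h2 := toWord_wd_mul_inv h
  rw [wd_mul_inv_eq, FreeGroup.toWord_mk] at h2
  exact h2

lemma norm_wd_mul_inv_of_chain {α β : List Λ} (h : (posW α ++ negW β).Chain' NC) :
    FreeGroup.norm (wd α * (wd β)⁻¹) = α.length + β.length := by
  rw [wd_mul_inv_eq, norm_eq_toWord_length, FreeGroup.toWord_mk,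
    reduce_eq_self_of_chain' h]
  simp

lemma toWord_mul_of_norm {u v : FreeGroup Λ}
    (h : FreeGroup.norm (u * v) = FreeGroup.norm u + FreeGroup.norm v) :
    (u * v).toWord = u.toWord ++ v.toWord := by
  have huv : u * v = FreeGroup.mk (u.toWord ++ v.toWord) := by
    rw [← FreeGroup.mul_mk, FreeGroup.mk_toWord, FreeGroup.mk_toWord]
  rw [huv, FreeGroup.toWord_mk]
  apply reduce_eq_of_length
  have : (FreeGroup.reduce (u.toWord ++ v.toWord)).length =
      FreeGroup.norm (u * v) := by
    rw [huv, norm_eq_toWord_length, FreeGroup.toWord_mk]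
  rw [this, h]
  simp [norm_eq_toWord_length]

lemma reduce_posW_negW (β : List Λ) : ∀ α : List Λ, ∃ a' b' s : List Λ,
    α = a' ++ s ∧ β = b' ++ s ∧
    FreeGroup.reduce (posW α ++ negW β) = posW a' ++ negW b' := by
  induction β using List.reverseRecOn with
  | nil =>
    intro α
    exact ⟨α, [], [], by simp, by simp,
      by simp [reduce_eq_self_of_chain' (chain'_posW α)]⟩
  | append_singleton bs b ih =>
    intro α
    rcases List.eq_nil_or_concat α with rfl | ⟨as, a, rfl⟩
    · exact ⟨[], bs ++ [b], [], rfl, by simp,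
        by simp [reduce_eq_self_of_chain' (chain'_negW (bs ++ [b]))]⟩
    · simp only [List.concat_eq_append]
      by_cases hab : a = b
      · subst hab
        have hstep : FreeGroup.Red.Step (posW (as ++ [a]) ++ negW (bs ++ [a]))
            (posW as ++ negW bs) := by
          rw [posW_append, negW_concat, List.append_assoc]
          have : posW [a] ++ (a, false) :: negW bs = (a, true) :: (a, !true) :: negW bs := rfl
          rw [this]
          exact FreeGroup.Red.Step.not
        obtain ⟨a', b', s, h1, h2, h3⟩ := ih as
        refine ⟨a', b', s ++ [a], by rw [h1, List.append_assoc], by rw [h2, List.append_assoc], ?_⟩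
        rw [FreeGroup.reduce.Step.eq hstep, h3]
      · refine ⟨as ++ [a], bs ++ [b], [], by simp, by simp, ?_⟩
        apply reduce_eq_self_of_chain'
        refine List.isChain_append.2 ⟨chain'_posW _, chain'_negW _, ?_⟩
        intro p hp q hq
        rw [posW_append, show posW [a] = [(a, true)] from rfl, List.getLast?_concat] at hp
        rw [negW_concat, List.head?_cons] at hq
        obtain rfl : (a, true) = p := by simpa using hp
        obtain rfl : (b, false) = q := by simpa using hq
        simp [NC, hab]

lemma eq_posW_split {a b m : List Λ} (h : posW a ++ negW b = posW m) :
    a = m ∧ b = [] := by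
  cases b with
  | nil =>
    simp only [negW_nil, List.append_nil] at h
    exact ⟨posW_injective h, rfl⟩
  | cons c t =>
    exfalso
    have hmem : (c, false) ∈ posW m := by
      rw [← h]
      refine List.mem_append_right _ ?_
      rw [negW_cons]
      exact List.mem_append_right _ (List.mem_singleton.2 rfl)
    simpa using mem_posW hmem

lemma mixed_ne_posW_negW {a b : List Λ} {L : List (Λ × Bool)} {z w : Λ}
    (h : posW a ++ negW b = L) (hlast : L.getLast? = some (z, true))
    (hw : (w, false) ∈ L) : False := by
  cases b with
  | nil =>
    rw [← h] at hw
    simp only [negW_nil, List.append_nil] at hw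
    simpa using mem_posW hw
  | cons c t =>
    rw [← h, negW_cons, ← List.append_assoc, List.getLast?_concat] at hlast
    simpa using hlast

end AuxWords

section AuxDyn
set_option linter.unusedSectionVars false

variable {Λ : Type} [DecidableEq Λ]

lemma tail_zero (x : ℕ → Λ) : tail x 0 = x := funext fun i => by simp [tail]

lemma cat_nil (y : ℕ → Λ) : cat [] y = y := funext fun n => by simp [cat]

lemma cat_append (α β : List Λ) (y : ℕ → Λ) :
    cat (α ++ β) y = cat α (cat β y) := by
  funext n
  simp only [cat, List.length_append]
  rcases lt_or_ge n α.length with h | h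
  · have h2 : n < (α ++ β).length := by simp; omega
    rw [List.getD_eq_getElem _ _ h2, List.getD_eq_getElem _ _ h,
      List.getElem_append, dif_pos h]
  · rw [List.getD_append_right _ _ _ _ h, List.getD_eq_default _ _ h]
    show β.getD (n - α.length) (y (n - (α.length + β.length))) =
      β.getD (n - α.length) (y (n - α.length - β.length))
    have he : n - (α.length + β.length) = n - α.length - β.length := by omega
    rw [he]

lemma tail_cat (α : List Λ) (y : ℕ → Λ) : tail (cat α y) α.length = y := by
  funext i
  simp only [tail, cat, List.getD_eq_default _ _ (show α.length ≤ α.length + i by omega)]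
  congr 1
  omega

lemma cat_tail_eq_self {α : List Λ} {x : ℕ → Λ} (h : Pref α x) :
    cat α (tail x α.length) = x := by
  funext n
  by_cases hn : n < α.length
  · rw [show cat α (tail x α.length) n = α.getD n _ from rfl,
      List.getD_eq_getElem _ _ hn]
    exact (h n hn).symm
  · rw [show cat α (tail x α.length) n = α.getD n (tail x α.length (n - α.length)) from rfl,
      List.getD_eq_default _ _ (le_of_not_gt hn)]
    show x (α.length + (n - α.length)) = x n
    congr 1
    omega

lemma Pref.mono {α' α : List Λ} {x : ℕ → Λ} (h : α' <+: α) (hp : Pref α x) :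
    Pref α' x := by
  intro i hi
  obtain ⟨t, rfl⟩ := h
  rw [hp i (by simp; omega)]
  rw [List.getElem_append, dif_pos hi]

lemma Pref.prefix_of_le {α₁ α₂ : List Λ} {x : ℕ → Λ} (h1 : Pref α₁ x) (h2 : Pref α₂ x)
    (hle : α₁.length ≤ α₂.length) : α₁ <+: α₂ := by
  have he : α₁ = α₂.take α₁.length := by
    apply List.ext_getElem (by simp; omega)
    intro i hi1 hi2
    rw [← h1 i hi1, List.getElem_take, ← h2 i (by omega)]
  rw [he]
  exact List.take_prefix _ _

lemma pref_nil (x : ℕ → Λ) : Pref [] x := fun i hi => by simp at hi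

lemma pref_concat_self {α : List Λ} {x : ℕ → Λ} (h : Pref α x) :
    Pref (α ++ [x α.length]) x := by
  intro i hi
  simp only [List.length_append, List.length_singleton] at hi
  rcases lt_or_ge i α.length with h2 | h2
  · rw [h i h2, List.getElem_append, dif_pos h2]
  · have : i = α.length := by omega
    subst this
    rw [List.getElem_append, dif_neg (by omega)]
    simp

section WithShift
variable {X : Set (ℕ → Λ)} (hS : ∀ x ∈ X, shiftMap x ∈ X)
include hS

lemma tail_mem {x : ℕ → Λ} (hx : x ∈ X) (n : ℕ) : tail x n ∈ X := by
  induction n with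
  | zero => rwa [tail_zero]
  | succ n ih =>
    have : tail x (n + 1) = shiftMap (tail x n) := by
      funext i
      show x (n + 1 + i) = x (n + (i + 1))
      congr 1
      omega
    rw [this]
    exact hS _ ih

lemma xi_stem {x : ℕ → Λ} (hx : x ∈ X) {α : List Λ} (hp : Pref α x) :
    wd α ∈ xiSet X x := by
  refine ⟨α, [], by rw [wd_nil]; group, ?_, hp, ⟨tail_mem hS hx _, ?_⟩, tail_mem hS hx _, ?_⟩
  · have hn := norm_wd_mul_inv_of_chain (α := α) (β := ([] : List Λ))
      (by simpa using chain'_posW α)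
    rw [wd_nil] at hn
    simpa using hn
  · rw [cat_tail_eq_self hp]; exact hx
  · rw [cat_nil]; exact tail_mem hS hx _

lemma xi_one {x : ℕ → Λ} (hx : x ∈ X) : (1 : FreeGroup Λ) ∈ xiSet X x := by
  have := xi_stem hS hx (pref_nil x)
  rwa [wd_nil] at this

lemma xi_suffix {x : ℕ → Λ} {α β t : List Λ}
    (hn : FreeGroup.norm (wd α * (wd β)⁻¹) = α.length + β.length)
    (hp : Pref α x) (hf : tail x α.length ∈ follower X α ∩ follower X β)
    (ht : t <:+ β) : wd α * (wd t)⁻¹ ∈ xiSet X x := by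
  have hchain : (posW α ++ negW β).Chain' NC := chain'_of_norm hn
  have hnegpre : negW t <+: negW β := by
    rw [negW, negW, List.reverse_prefix]
    exact List.IsSuffix.map _ ht
  obtain ⟨r, hr⟩ := hnegpre
  have hpre : posW α ++ negW t <+: posW α ++ negW β :=
    ⟨r, by rw [List.append_assoc, hr]⟩
  refine ⟨α, t, rfl, norm_wd_mul_inv_of_chain (hchain.prefix hpre), hp, hf.1, hf.1.1, ?_⟩
  obtain ⟨p, hpβ⟩ := ht
  have h2 := hf.2.2
  rw [← hpβ] at h2
  rw [cat_append] at h2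
  have := tail_mem hS h2 p.length
  rwa [tail_cat] at this

end WithShift
end AuxDyn

section AuxConvex
set_option linter.unusedSectionVars false

variable {Λ : Type} [DecidableEq Λ]

lemma prefix_append_cases {σ : Type*} {p l₁ l₂ : List σ} (h : p <+: l₁ ++ l₂) :
    p <+: l₁ ∨ ∃ q, q <+: l₂ ∧ p = l₁ ++ q := by
  rcases le_or_gt p.length l₁.length with hl | hl
  · exact Or.inl (List.prefix_of_prefix_length_le h (List.prefix_append _ _) hl)
  · right
    have h2 : l₁ <+: p :=
      List.prefix_of_prefix_length_le (List.prefix_append _ _) h (le_of_lt hl)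
    obtain ⟨q, rfl⟩ := h2
    obtain ⟨r, hr⟩ := h
    rw [List.append_assoc] at hr
    exact ⟨q, ⟨r, List.append_cancel_left hr⟩, rfl⟩

lemma prefix_posW_cases {p : List (Λ × Bool)} {α : List Λ} (h : p <+: posW α) :
    ∃ a₀, a₀ <+: α ∧ p = posW a₀ := by
  refine ⟨α.take p.length, List.take_prefix _ _, ?_⟩
  have h2 : (posW α).take p.length = posW (α.take p.length) := by
    rw [posW, posW, List.map_take]
  conv_lhs => rw [List.prefix_iff_eq_take.1 h]
  exact h2

lemma prefix_negW_cases {p : List (Λ × Bool)} {β : List Λ} (h : p <+: negW β) :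
    ∃ t, t <:+ β ∧ p = negW t := by
  refine ⟨β.drop (β.length - p.length), List.drop_suffix _ _, ?_⟩
  have h2 : (negW β).take p.length = negW (β.drop (β.length - p.length)) := by
    rw [negW, negW, List.map_drop, List.take_reverse]
    congr 2
    simp
  conv_lhs => rw [List.prefix_iff_eq_take.1 h]
  exact h2

section ConvexMain
variable {X : Set (ℕ → Λ)} (hS : ∀ x ∈ X, shiftMap x ∈ X)
include hS

lemma xi_convex_aux {x : ℕ → Λ} (hx : x ∈ X) {k : FreeGroup Λ} {α₁ β₁ α₂ β₂ : List Λ}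
    (h1n : FreeGroup.norm (wd α₁ * (wd β₁)⁻¹) = α₁.length + β₁.length)
    (h1p : Pref α₁ x)
    (h1f : tail x α₁.length ∈ follower X α₁ ∩ follower X β₁)
    (h2n : FreeGroup.norm (wd α₂ * (wd β₂)⁻¹) = α₂.length + β₂.length)
    (h2p : Pref α₂ x)
    (h2f : tail x α₂.length ∈ follower X α₂ ∩ follower X β₂)
    (hle : α₁.length ≤ α₂.length)
    (hnorm : FreeGroup.norm ((wd α₁ * (wd β₁)⁻¹)⁻¹ * (wd α₂ * (wd β₂)⁻¹)) =
      FreeGroup.norm ((wd α₁ * (wd β₁)⁻¹)⁻¹ * k) +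
      FreeGroup.norm (k⁻¹ * (wd α₂ * (wd β₂)⁻¹))) :
    k ∈ xiSet X x := by
  obtain ⟨δ, rfl⟩ := h1p.prefix_of_le h2p hle
  set g := wd α₁ * (wd β₁)⁻¹ with hg
  set h := wd (α₁ ++ δ) * (wd β₂)⁻¹ with hh
  have gih : g⁻¹ * h = FreeGroup.mk (posW (β₁ ++ δ) ++ negW β₂) := by
    rw [hg, hh, ← wd_mul_inv_eq, wd_append, wd_append]
    group
  obtain ⟨A', B', s, hAs, hBs, hred⟩ := reduce_posW_negW β₂ (β₁ ++ δ)
  have hW : (g⁻¹ * h).toWord = posW A' ++ negW B' := by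
    rw [gih, FreeGroup.toWord_mk, hred]
  have hsplit : (g⁻¹ * h).toWord = (g⁻¹ * k).toWord ++ (k⁻¹ * h).toWord := by
    have hmul : (g⁻¹ * k) * (k⁻¹ * h) = g⁻¹ * h := by group
    rw [← hmul]
    exact toWord_mul_of_norm (by rw [hmul]; exact hnorm)
  have hpre : (g⁻¹ * k).toWord <+: posW A' ++ negW B' :=
    ⟨(k⁻¹ * h).toWord, by rw [← hW, hsplit]⟩
  have hk : k = g * FreeGroup.mk ((g⁻¹ * k).toWord) := by
    rw [FreeGroup.mk_toWord]; group
  rcases prefix_append_cases hpre with hp1 | ⟨q, hq, hpq⟩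
  · obtain ⟨a₀, ha₀, hpw⟩ := prefix_posW_cases hp1
    have ha₀' : a₀ <+: β₁ ++ δ := ha₀.trans ⟨s, hAs.symm⟩
    rcases le_or_gt a₀.length β₁.length with hc | hc
    · have hab : a₀ <+: β₁ :=
        List.prefix_of_prefix_length_le ha₀' (List.prefix_append _ _) hc
      obtain ⟨r, hr⟩ := hab
      have hk2 : k = wd α₁ * (wd r)⁻¹ := by
        rw [hk, hpw, ← wd_eq_mk, hg, ← hr, wd_append]
        group
      rw [hk2]
      exact xi_suffix hS h1n h1p h1f ⟨a₀, hr⟩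
    · have hba : β₁ <+: a₀ :=
        List.prefix_of_prefix_length_le (List.prefix_append _ _) ha₀' (le_of_lt hc)
      obtain ⟨δ₀, hδ₀⟩ := hba
      have hδδ : δ₀ <+: δ := by
        have h3 : β₁ ++ δ₀ <+: β₁ ++ δ := by rw [hδ₀]; exact ha₀'
        exact (List.prefix_append_right_inj β₁).1 h3
      have hk2 : k = wd (α₁ ++ δ₀) := by
        rw [hk, hpw, ← wd_eq_mk, hg, ← hδ₀, wd_append β₁ δ₀, wd_append α₁ δ₀]
        group
      rw [hk2]
      exact xi_stem hS hx (Pref.mono ((List.prefix_append_right_inj α₁).2 hδδ) h2p)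
  · obtain ⟨t, ht, hqw⟩ := prefix_negW_cases hq
    have hwA : wd β₁ * wd δ = wd A' * wd s := by
      rw [← wd_append, ← wd_append, hAs]
    have hk2 : k = wd (α₁ ++ δ) * (wd (t ++ s))⁻¹ := by
      rw [hk, hpq, hqw, ← wd_mul_inv_eq, hg, wd_append α₁ δ, wd_append t s]
      have hA' : wd A' = wd β₁ * wd δ * (wd s)⁻¹ := by rw [hwA]; group
      rw [hA']
      group
    rw [hk2]
    refine xi_suffix hS h2n h2p h2f ?_
    obtain ⟨pp, hpp⟩ := ht
    exact ⟨pp, by rw [← List.append_assoc, hpp]; exact hBs.symm⟩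

lemma xi_convex {x : ℕ → Λ} (hx : x ∈ X) {g h k : FreeGroup Λ}
    (hgm : g ∈ xiSet X x) (hhm : h ∈ xiSet X x)
    (hnorm : FreeGroup.norm (g⁻¹ * h) =
      FreeGroup.norm (g⁻¹ * k) + FreeGroup.norm (k⁻¹ * h)) :
    k ∈ xiSet X x := by
  obtain ⟨α₁, β₁, rfl, h1n, h1p, h1f⟩ := hgm
  obtain ⟨α₂, β₂, rfl, h2n, h2p, h2f⟩ := hhm
  rcases le_total α₁.length α₂.length with hle | hle
  · exact xi_convex_aux hS hx h1n h1p h1f h2n h2p h2f hle hnorm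
  · apply xi_convex_aux hS hx h2n h2p h2f h1n h1p h1f hle
    set g := wd α₁ * (wd β₁)⁻¹
    set h := wd α₂ * (wd β₂)⁻¹
    have e1 : h⁻¹ * g = (g⁻¹ * h)⁻¹ := by group
    have e2 : h⁻¹ * k = (k⁻¹ * h)⁻¹ := by group
    have e3 : k⁻¹ * g = (g⁻¹ * k)⁻¹ := by group
    rw [e1, e2, e3, FreeGroup.norm_inv_eq, FreeGroup.norm_inv_eq,
      FreeGroup.norm_inv_eq, hnorm, Nat.add_comm]

end ConvexMain
end AuxConvex

section AuxLetterLang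
set_option linter.unusedSectionVars false

variable {Λ : Type} [DecidableEq Λ]

lemma list_tri : ∀ (β γ : List Λ), β <+: γ ∨ γ <+: β ∨
    ∃ c β₂ γ₂ b d, β = c ++ b :: β₂ ∧ γ = c ++ d :: γ₂ ∧ b ≠ d
  | [], γ => Or.inl (List.nil_prefix)
  | _ :: _, [] => Or.inr (Or.inl List.nil_prefix)
  | b :: β₂, d :: γ₂ => by
    by_cases hbd : b = d
    · subst hbd
      rcases list_tri β₂ γ₂ with h | h | ⟨c, β₃, γ₃, b', d', h1, h2, h3⟩
      · exact Or.inl (List.cons_prefix_cons.2 ⟨rfl, h⟩)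
      · exact Or.inr (Or.inl (List.cons_prefix_cons.2 ⟨rfl, h⟩))
      · exact Or.inr (Or.inr ⟨b :: c, β₃, γ₃, b', d',
          by rw [h1]; rfl, by rw [h2]; rfl, h3⟩)
    · exact Or.inr (Or.inr ⟨[], β₂, γ₂, b, d, rfl, rfl, hbd⟩)

lemma posW_getLast?_true {l : List Λ} (hl : l ≠ []) :
    ∃ z, (posW l).getLast? = some (z, true) := by
  rw [posW, List.getLast?_map]
  obtain ⟨z, hz⟩ := Option.isSome_iff_exists.1 (by simpa using hl : l.getLast?.isSome)
  exact ⟨z, by rw [hz]; rfl⟩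

section WithShift
variable {X : Set (ℕ → Λ)} (hS : ∀ x ∈ X, shiftMap x ∈ X)
include hS

lemma xi_letter {x : ℕ → Λ} (hx : x ∈ X) {g : FreeGroup Λ} (hg : g ∈ xiSet X x) :
    ∃! a : Λ, g * FreeGroup.of a ∈ xiSet X x := by
  obtain ⟨α, β, rfl, hn, hp, hf⟩ := hg
  cases β with
  | nil =>
    refine ⟨x α.length, ?_, ?_⟩
    · have e : wd α * (wd ([] : List Λ))⁻¹ * FreeGroup.of (x α.length) =
          wd (α ++ [x α.length]) := by
        rw [wd_append, wd_nil, wd_cons, wd_nil]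
        group
      show wd α * (wd ([] : List Λ))⁻¹ * FreeGroup.of (x α.length) ∈ xiSet X x
      rw [e]
      exact xi_stem hS hx (pref_concat_self hp)
    · intro b hb
      obtain ⟨α', β', hb1, hb2, hb3, _⟩ := hb
      have h3 : (wd α' * (wd β')⁻¹).toWord = posW α' ++ negW β' :=
        toWord_wd_mul_inv (by rw [← hb1]; exact hb2)
      have h4 : wd α' * (wd β')⁻¹ = wd (α ++ [b]) := by
        rw [← hb1, wd_append, wd_nil, wd_cons, wd_nil]
        group
      have h5 : (wd (α ++ [b])).toWord = posW (α ++ [b]) := by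
        rw [wd_eq_mk, FreeGroup.toWord_mk, reduce_eq_self_of_chain' (chain'_posW _)]
      have h6 : posW α' ++ negW β' = posW (α ++ [b]) := by rw [← h3, h4, h5]
      obtain ⟨hα', hβ'⟩ := eq_posW_split h6
      subst hα'
      have := hb3 α.length (by simp)
      rw [List.getElem_concat_length rfl] at this
      exact this.symm
  | cons c β' =>
    refine ⟨c, ?_, ?_⟩
    · have e : wd α * (wd (c :: β'))⁻¹ * FreeGroup.of c = wd α * (wd β')⁻¹ := by
        rw [wd_cons]
        group
      show wd α * (wd (c :: β'))⁻¹ * FreeGroup.of c ∈ xiSet X x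
      rw [e]
      exact xi_suffix hS hn hp hf ⟨[c], rfl⟩
    · intro b hb
      by_contra hbc
      obtain ⟨α', β'', hb1, hb2, _, _⟩ := hb
      have h3 : (wd α' * (wd β'')⁻¹).toWord = posW α' ++ negW β'' :=
        toWord_wd_mul_inv (by rw [← hb1]; exact hb2)
      have hch : ((posW α ++ negW (c :: β')) ++ [(b, true)]).Chain' NC := by
        refine List.isChain_append.2 ⟨chain'_of_norm hn, List.isChain_singleton _, ?_⟩
        intro p hp' q hq'
        rw [negW_cons, ← List.append_assoc, List.getLast?_concat] at hp'
        rw [List.head?_cons] at hq'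
        obtain rfl : (c, false) = p := by simpa using hp'
        obtain rfl : (b, true) = q := by simpa using hq'
        simp only [NC, not_and]
        intro hcb
        exact absurd hcb.symm hbc
      have h5 : (wd α * (wd (c :: β'))⁻¹ * FreeGroup.of b).toWord =
          (posW α ++ negW (c :: β')) ++ [(b, true)] := by
        have e2 : wd α * (wd (c :: β'))⁻¹ * FreeGroup.of b =
            FreeGroup.mk ((posW α ++ negW (c :: β')) ++ [(b, true)]) := by
          rw [wd_mul_inv_eq, show FreeGroup.of b = FreeGroup.mk [(b, true)] from rfl,
            FreeGroup.mul_mk]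
        rw [e2, FreeGroup.toWord_mk, reduce_eq_self_of_chain' hch]
      have h6 : posW α' ++ negW β'' = (posW α ++ negW (c :: β')) ++ [(b, true)] := by
        rw [← h3, ← hb1, h5]
      refine mixed_ne_posW_negW (w := c) h6 List.getLast?_concat ?_
      refine List.mem_append_left _ (List.mem_append_right _ ?_)
      rw [negW_cons]
      exact List.mem_append_right _ (List.mem_singleton.2 rfl)

lemma xi_lang {x : ℕ → Λ} (hx : x ∈ X) {g : FreeGroup Λ} {γ : List Λ}
    (hg : g ∈ xiSet X x) (hgγ : g * wd γ ∈ xiSet X x) : γ ∈ Language X := by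
  obtain ⟨α, β, rfl, hn, hp, hf⟩ := hg
  have hyX : tail x α.length ∈ X := hf.1.1
  have hβy : cat β (tail x α.length) ∈ X := hf.2.2
  rcases list_tri β γ with hpre | hpre | ⟨c, β₂, γ₂, b, d, hb, hd, hbd⟩
  · -- β is a prefix of γ
    obtain ⟨γ', rfl⟩ := hpre
    obtain ⟨α', β', h1, h2, h3, _⟩ := hgγ
    have e : wd α * (wd β)⁻¹ * wd (β ++ γ') = wd (α ++ γ') := by
      rw [wd_append, wd_append]
      group
    have h5 : (wd (α ++ γ')).toWord = posW (α ++ γ') := by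
      rw [wd_eq_mk, FreeGroup.toWord_mk, reduce_eq_self_of_chain' (chain'_posW _)]
    have h6 : posW α' ++ negW β' = posW (α ++ γ') := by
      rw [← toWord_wd_mul_inv (by rw [← h1]; exact h2), ← h1, e, h5]
    obtain ⟨hα', hβ'⟩ := eq_posW_split h6
    subst hα'
    refine ⟨cat β (tail x α.length), hβy, 0, ?_⟩
    intro i hi
    simp only [Nat.zero_add]
    by_cases hiβ : i < β.length
    · rw [show cat β (tail x α.length) i = β.getD i _ from rfl,
        List.getD_eq_getElem _ _ hiβ, List.getElem_append_left hiβ]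
    · have hil : i < β.length + γ'.length := by simpa using hi
      rw [show cat β (tail x α.length) i = β.getD i (tail x α.length (i - β.length)) from rfl,
        List.getD_eq_default _ _ (le_of_not_gt hiβ)]
      show x (α.length + (i - β.length)) = _
      have h7 := h3 (α.length + (i - β.length)) (by simp; omega)
      rw [h7, List.getElem_append_right (by omega), List.getElem_append_right (le_of_not_gt hiβ)]
      congr 1
      omega
  · -- γ is a prefix of β
    obtain ⟨t, rfl⟩ := hpre
    refine ⟨cat (γ ++ t) (tail x α.length), hβy, 0, ?_⟩
    intro i hi
    simp only [Nat.zero_add]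
    have hit : i < (γ ++ t).length := by simp; omega
    rw [show cat (γ ++ t) (tail x α.length) i = (γ ++ t).getD i _ from rfl,
      List.getD_eq_getElem _ _ hit, List.getElem_append_left hi]
  · -- mismatch: impossible
    exfalso
    obtain ⟨α', β', h1, h2, _, _⟩ := hgγ
    have e : wd α * (wd β)⁻¹ * wd γ =
        FreeGroup.mk ((posW α ++ negW (b :: β₂)) ++ posW (d :: γ₂)) := by
      have e0 : wd α * (wd β)⁻¹ * wd γ = wd α * (wd (b :: β₂))⁻¹ * wd (d :: γ₂) := by
        rw [hb, hd, wd_append, wd_append]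
        group
      rw [e0, wd_mul_inv_eq, wd_eq_mk, FreeGroup.mul_mk]
    have hch : ((posW α ++ negW (b :: β₂)) ++ posW (d :: γ₂)).Chain' NC := by
      refine List.isChain_append.2 ⟨?_, chain'_posW _, ?_⟩
      · refine (chain'_of_norm hn).prefix ?_
        have hsuf : negW (b :: β₂) <+: negW β := by
          rw [negW, negW, List.reverse_prefix]
          exact List.IsSuffix.map _ ⟨c, hb.symm⟩
        obtain ⟨r, hr⟩ := hsuf
        exact ⟨r, by rw [List.append_assoc, hr]⟩
      · intro p hp' q hq'
        rw [negW_cons, ← List.append_assoc, List.getLast?_concat] at hp'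
        rw [posW_cons, List.head?_cons] at hq'
        obtain rfl : (b, false) = p := by simpa using hp'
        obtain rfl : (d, true) = q := by simpa using hq'
        simp only [NC, not_and]
        intro hbd'
        exact absurd hbd' hbd
    have h5 : (wd α * (wd β)⁻¹ * wd γ).toWord =
        (posW α ++ negW (b :: β₂)) ++ posW (d :: γ₂) := by
      rw [e, FreeGroup.toWord_mk, reduce_eq_self_of_chain' hch]
    have h6 : posW α' ++ negW β' = (posW α ++ negW (b :: β₂)) ++ posW (d :: γ₂) := by
      rw [← toWord_wd_mul_inv (by rw [← h1]; exact h2), ← h1, h5]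
    obtain ⟨z, hz⟩ := posW_getLast?_true (l := d :: γ₂) (by simp)
    refine mixed_ne_posW_negW (z := z) (w := b) h6 ?_ ?_
    · rw [List.getLast?_append, hz]
      rfl
    · refine List.mem_append_left _ (List.mem_append_right _ ?_)
      rw [negW_cons]
      exact List.mem_append_right _ (List.mem_singleton.2 rfl)

end WithShift
end AuxLetterLang

section Transfer
set_option linter.unusedSectionVars false

variable {Λ : Type} [DecidableEq Λ]

lemma xiB_eq_true_iff {X : Set (ℕ → Λ)} {x : ℕ → Λ} {g : FreeGroup Λ} :
    xiB X x g = true ↔ g ∈ xiSet X x := by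
  by_cases h : g ∈ xiSet X x <;> simp [xiB, chi, h]

lemma omega_transfer {ι : Type} [Finite ι] (X : Set (ℕ → Λ)) (e : ι → FreeGroup Λ)
    (Q : (ι → Bool) → Prop) (hx : ∀ x ∈ X, Q (fun i => xiB X x (e i))) :
    ∀ ξ ∈ Omega X, Q (fun i => ξ (e i)) := by
  intro ξ hξ
  have hcont : Continuous (fun ξ : FreeGroup Λ → Bool => (fun i => ξ (e i) : ι → Bool)) :=
    continuous_pi fun i => continuous_apply (e i)
  have hclosed : IsClosed ((fun ξ : FreeGroup Λ → Bool =>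
      (fun i => ξ (e i) : ι → Bool)) ⁻¹' {v | Q v}) :=
    (isClosed_discrete _).preimage hcont
  exact closure_minimal (by rintro _ ⟨x, hxX, rfl⟩; exact hx x hxX) hclosed hξ

end Transfer

/-- basic properties of the elements of the spectrum `Ω_X`. -/
theorem omega_mem_properties {Λ : Type} [Fintype Λ] [Nonempty Λ] [DecidableEq Λ]
    [TopologicalSpace Λ] [DiscreteTopology Λ]
    (X : Set (ℕ → Λ)) (hX : IsSubshift X)
    (ξ : FreeGroup Λ → Bool) (hξ : ξ ∈ Omega X) :
    ξ 1 = true ∧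
    (∀ g h k : FreeGroup Λ, ξ g = true → ξ h = true →
        FreeGroup.norm (g⁻¹ * h) = FreeGroup.norm (g⁻¹ * k) + FreeGroup.norm (k⁻¹ * h) →
        ξ k = true) ∧
    (∀ g : FreeGroup Λ, ξ g = true → ∃! a : Λ, ξ (g * FreeGroup.of a) = true) ∧
    (∀ (g : FreeGroup Λ) (α : List Λ), ξ g = true → ξ (g * wd α) = true →
        α ∈ Language X) ∧
    (∀ g : FreeGroup Λ, ξ g = true → ∃ α β : List Λ, g = wd α * (wd β)⁻¹) := by
  obtain ⟨-, -, hS⟩ := hX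
  refine ⟨?_, ?_, ?_, ?_, ?_⟩
  · exact omega_transfer X (fun _ : Unit => (1 : FreeGroup Λ)) (fun v => v () = true)
      (fun x hx => xiB_eq_true_iff.2 (xi_one hS hx)) ξ hξ
  · intro g h k hg hh hnorm
    exact omega_transfer X ![g, h, k] (fun v => v 0 = true → v 1 = true → v 2 = true)
      (fun x hx h0 h1 => xiB_eq_true_iff.2
        (xi_convex hS hx (xiB_eq_true_iff.1 h0) (xiB_eq_true_iff.1 h1) hnorm)) ξ hξ hg hh
  · intro g hg
    exact omega_transfer X (fun o : Option Λ => o.elim g (fun a => g * FreeGroup.of a))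
      (fun v => v none = true → ∃! a : Λ, v (some a) = true)
      (fun x hx h0 => by
        obtain ⟨a, ha, hu⟩ := xi_letter hS hx (xiB_eq_true_iff.1 h0)
        exact ⟨a, xiB_eq_true_iff.2 ha, fun b hb => hu b (xiB_eq_true_iff.1 hb)⟩) ξ hξ hg
  · intro g γ hg hgγ
    exact omega_transfer X (fun i : Bool => if i then g * wd γ else g)
      (fun v => v false = true → v true = true → γ ∈ Language X)
      (fun x hx h0 h1 =>
        xi_lang hS hx (xiB_eq_true_iff.1 h0) (xiB_eq_true_iff.1 h1)) ξ hξ hg hgγ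
  · intro g hg
    exact omega_transfer X (fun _ : Unit => g)
      (fun v => v () = true → ∃ α β : List Λ, g = wd α * (wd β)⁻¹)
      (fun x hx h0 => by
        obtain ⟨α, β, h1, -⟩ := xiB_eq_true_iff.1 h0
        exact ⟨α, β, h1⟩) ξ hξ hg

end SubshiftPaper
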